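/- Let T be a triangle presentation compatible with σ on an n-dimensional vector space V over a finite field F with q elements (n ≥ 3). Let a satisfy 1 < a < n, let z ∈ Π_a and u, v ∈ Π₁, and set A := {(p,q′,r,s) ∈ Π_{a−1} × Π₂ × Π₁ × Π₁ : (z, σ r, σ p) ∈ T ∧ (r, u, σ q′) ∈ T ∧ (p, s, σ z) ∈ T ∧ (s, v, σ q′) ∈ T}. Then: (a) if A is nonempty then u = v; (b) if there exists p′ ∈ Π_{a+1} with (z, u, σ p′) ∈ T and (z, v, σ p′) ∈ T then u = v; (c) if u = v then card A = card {r ∈ Π₁ : σ z ≤ σ r ∧ u ≤ σ r}; (d) if moreover 1 < a < n − 1, u = v, and p is a prime with q ≡ 1 (mod p), then (card A : ZMod p) = (card {p′ ∈ Π_{a+1} : (z, u, σ p′) ∈ T} : ZMod p) + (a − 1 : ZMod p). -/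

import Mathlib

open Module

/-- The set `Π` of proper nontrivial subspaces of `V`, as a subtype. -/
def ProjGeom (F V : Type*) [Field F] [AddCommGroup V] [Module F V] (n : ℕ) :=
  {U : Submodule F V // 0 < Module.finrank F U ∧ Module.finrank F U < n}


lemma aux_dvd_eq_n {n s : ℕ} (hd : n ∣ s) (h0 : 0 < s) (hu : s < 2 * n) : s = n := by
  obtain ⟨k, rfl⟩ := hd
  have hk1 : 1 ≤ k := by by_contra h; push_neg at h; interval_cases k <;> omega
  have hk2 : k < 2 := by
    by_contra h; push_neg at h
    have : n * 2 ≤ n * k := Nat.mul_le_mul_left n h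
    omega
  interval_cases k <;> omega

lemma aux_dvd_eq_2n {n s : ℕ} (hd : n ∣ s) (hl : n < s) (hu : s < 3 * n) : s = 2 * n := by
  obtain ⟨k, rfl⟩ := hd
  have hk1 : 1 ≤ k := by by_contra h; push_neg at h; interval_cases k <;> omega
  have hk2 : k < 3 := by
    by_contra h; push_neg at h
    have : n * 3 ≤ n * k := Nat.mul_le_mul_left n h
    omega
  interval_cases k <;> omega

lemma aux_card_lines (F : Type*) [Field F] [Fintype F] (M : Type*) [AddCommGroup M]
    [Module F M] [FiniteDimensional F M] :
    Nat.card {L : Submodule F M // finrank F L = 1} * (Fintype.card F - 1)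
      = Fintype.card F ^ finrank F M - 1 := by
  classical
  have : Finite M := Module.finite_of_finite F
  cases nonempty_fintype M
  have hfinsub : Finite (Submodule F M) :=
    Finite.of_injective (fun U : Submodule F M => (U : Set M)) fun a b h => by
      simpa using h
  letI : Fintype (Submodule F M) := Fintype.ofFinite _
  set f : {v : M // v ≠ 0} → {L : Submodule F M // finrank F L = 1} :=
    fun v => ⟨Submodule.span F {v.1}, finrank_span_singleton v.2⟩ with hf
  have e1 : (Σ L : {L : Submodule F M // finrank F L = 1}, {v // f v = L})
      ≃ {v : M // v ≠ 0} := Equiv.sigmaFiberEquiv f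
  have e2 : ∀ L : {L : Submodule F M // finrank F L = 1},
      {v // f v = L} ≃ {w : L.1 // w ≠ 0} := fun L =>
    { toFun := fun v => ⟨⟨v.1.1, by
        have := congrArg Subtype.val v.2
        dsimp [f] at this
        rw [← this]
        exact Submodule.mem_span_singleton_self _⟩, by
        intro h
        exact v.1.2 (by simpa using congrArg Subtype.val h)⟩
      invFun := fun w => ⟨⟨w.1.1, fun h => w.2 (by ext; simpa using h)⟩, by
        apply Subtype.ext
        dsimp [f]
        apply Submodule.eq_of_le_of_finrank_eq
        · rw [Submodule.span_le, Set.singleton_subset_iff]; exact w.1.2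
        · rw [L.2, finrank_span_singleton]
          intro h
          exact w.2 (by ext; simpa using h)⟩
      left_inv := fun v => Subtype.ext (Subtype.ext rfl)
      right_inv := fun w => Subtype.ext (Subtype.ext rfl) }
  have hcard1 : Nat.card {v : M // v ≠ 0} = Fintype.card M - 1 := by
    rw [Nat.card_eq_fintype_card]
    have : Fintype.card {v : M // v ≠ 0} = Fintype.card M - Fintype.card {v : M // v = 0} := by
      exact Fintype.card_subtype_compl _
    rw [this, Fintype.card_subtype_eq]
  have hfib : ∀ L : {L : Submodule F M // finrank F L = 1},
      Fintype.card {v // f v = L} = Fintype.card F - 1 := by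
    intro L
    rw [Fintype.card_congr (e2 L)]
    have hcl : Fintype.card L.1 = Fintype.card F ^ finrank F L.1 := card_eq_pow_finrank
    have : Fintype.card {w : L.1 // w ≠ 0}
        = Fintype.card L.1 - Fintype.card {w : L.1 // w = 0} := Fintype.card_subtype_compl _
    rw [this, Fintype.card_subtype_eq, hcl, L.2, pow_one]
  have := Fintype.card_congr e1
  rw [Fintype.card_sigma] at this
  simp only [hfib, Finset.sum_const, Finset.card_univ, smul_eq_mul] at this
  simp only [← Nat.card_eq_fintype_card] at this hcard1 ⊢
  rw [this, hcard1, Nat.card_eq_fintype_card, Nat.card_eq_fintype_card,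
    card_eq_pow_finrank (K := F) (V := M)]

lemma aux_card_lines_le {F : Type*} [Field F] [Fintype F] {V : Type*} [AddCommGroup V]
    [Module F V] [FiniteDimensional F V] (U : Submodule F V) :
    Nat.card {L : Submodule F V // finrank F L = 1 ∧ L ≤ U} * (Fintype.card F - 1)
      = Fintype.card F ^ finrank F U - 1 := by
  let e0 : Submodule F U ≃ {p' : Submodule F V // p' ≤ U} :=
    (Submodule.MapSubtype.orderIso U).toEquiv
  have e1 : {L' : Submodule F U // finrank F L' = 1}
      ≃ {x : {p' : Submodule F V // p' ≤ U} // finrank F x.1 = 1} :=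
    e0.subtypeEquiv fun L' => by
      rw [show (e0 L').1 = Submodule.map U.subtype L' from rfl,
        Submodule.finrank_map_subtype_eq]
      
  have e2 : {x : {p' : Submodule F V // p' ≤ U} // finrank F x.1 = 1}
      ≃ {L : Submodule F V // L ≤ U ∧ finrank F L = 1} :=
    Equiv.subtypeSubtypeEquivSubtypeInter (fun p' : Submodule F V => p' ≤ U) (fun L => finrank F L = 1)
  have e3 : {L : Submodule F V // L ≤ U ∧ finrank F L = 1}
      ≃ {L : Submodule F V // finrank F L = 1 ∧ L ≤ U} :=
    Equiv.subtypeEquivRight fun L => and_comm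
  rw [← Nat.card_congr (e1.trans (e2.trans e3))]
  exact aux_card_lines F U

lemma aux_card_hyperplanes {F : Type*} [Field F] [Fintype F] {V : Type*} [AddCommGroup V]
    [Module F V] [FiniteDimensional F V] (W : Submodule F V) (h0 : 0 < finrank F V) :
    Nat.card {H : Submodule F V // finrank F H = finrank F V - 1 ∧ W ≤ H} * (Fintype.card F - 1)
      = Fintype.card F ^ (finrank F V - finrank F W) - 1 := by
  have hann : ∀ H : Submodule F V, finrank F H + finrank F H.dualAnnihilator = finrank F V := by
    intro H
    have h1 : finrank F (V ⧸ H) = finrank F H.dualAnnihilator :=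
      LinearEquiv.finrank_eq (Subspace.quotEquivAnnihilator H)
    have h2 := Submodule.finrank_quotient_add_finrank H
    omega
  have e : {H : Submodule F V // finrank F H = finrank F V - 1 ∧ W ≤ H}
      ≃ {L : Submodule F (Module.Dual F V) // finrank F L = 1 ∧ L ≤ W.dualAnnihilator} :=
    { toFun := fun H => ⟨H.1.dualAnnihilator, by have := hann H.1; omega,
        Submodule.dualAnnihilator_anti H.2.2⟩
      invFun := fun L => ⟨L.1.dualCoannihilator, by
        constructor
        · have := Subspace.finrank_add_finrank_dualCoannihilator_eq L.1
          have hl := L.2.1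
          omega
        · exact (Submodule.le_dualAnnihilator_iff_le_dualCoannihilator).mp L.2.2⟩
      left_inv := fun H => Subtype.ext Subspace.dualAnnihilator_dualCoannihilator_eq
      right_inv := fun L => Subtype.ext (Subspace.dualCoannihilator_dualAnnihilator_eq) }
  rw [Nat.card_congr e, aux_card_lines_le]
  have := hann W
  congr 2
  omega

lemma aux_zmod {q c X p : ℕ} (hq2 : 2 ≤ q) (h : X * (q - 1) = q ^ c - 1)
    (hmod : q ≡ 1 [MOD p]) : (X : ZMod p) = c := by
  have hX : X = ∑ i ∈ Finset.range c, q ^ i := by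
    have h1 : (X : ℤ) * ((q : ℤ) - 1) = (q : ℤ) ^ c - 1 := by
      have hq1 : 1 ≤ q := by omega
      have hqc : 1 ≤ q ^ c := Nat.one_le_pow _ _ (by omega)
      push_cast [Nat.cast_sub hq1, Nat.cast_sub hqc] at h ⊢
      exact_mod_cast h
    have h2 : ((∑ i ∈ Finset.range c, q ^ i : ℕ) : ℤ) * ((q : ℤ) - 1) = (q : ℤ) ^ c - 1 := by
      push_cast
      exact geom_sum_mul _ _
    have hne : (q : ℤ) - 1 ≠ 0 := by
      have : (2 : ℤ) ≤ (q : ℤ) := by exact_mod_cast hq2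
      omega
    have := mul_right_cancel₀ hne (h1.trans h2.symm)
    exact_mod_cast this
  rw [hX]
  push_cast
  have hq1 : (q : ZMod p) = 1 := by
    have := (ZMod.natCast_eq_natCast_iff q 1 p).mpr hmod
    simpa using this
  simp [hq1]

set_option maxHeartbeats 2000000 in
theorem stmt_10
    (F : Type*) [Field F] [Fintype F] (V : Type*) [AddCommGroup V] [Module F V]
    [FiniteDimensional F V] (q n : ℕ) (hq : Fintype.card F = q)
    (hn : Module.finrank F V = n) (hn3 : 3 ≤ n)
    (σ : ProjGeom F V n → ProjGeom F V n)
    (hσ : ∀ x, σ (σ x) = x)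
    (hσdim : ∀ x : ProjGeom F V n,
      Module.finrank F (σ x).val = n - Module.finrank F x.val)
    (T : Set (ProjGeom F V n × ProjGeom F V n × ProjGeom F V n))
    (h1 : ∀ u v : ProjGeom F V n, (∃ w, (u, v, w) ∈ T) ↔
      (σ u ≠ v ∧ ((σ u).val ≤ v.val ∨ v.val ≤ (σ u).val)))
    (h2 : ∀ u v w, (u, v, w) ∈ T → (v, w, u) ∈ T)
    (h3 : ∀ u v w, (u, v, w) ∈ T →
      n ∣ Module.finrank F u.val + Module.finrank F v.val + Module.finrank F w.val)
    (h4 : ∀ u v w₁ w₂, (u, v, w₁) ∈ T → (u, v, w₂) ∈ T → w₁ = w₂)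
    (h5 : ∀ u v w, (u, v, w) ∈ T → (σ w, σ v, σ u) ∈ T)
    (h6' : ∀ u v w r s, (u, v, σ r) ∈ T → (r, w, σ s) ∈ T →
      Module.finrank F u.val + Module.finrank F v.val + Module.finrank F w.val < n →
      ∃! t, (u, t, σ s) ∈ T ∧ (v, w, σ t) ∈ T)
    (h6'' : ∀ u t s v w, (u, t, σ s) ∈ T → (v, w, σ t) ∈ T →
      Module.finrank F u.val + Module.finrank F v.val + Module.finrank F w.val < n →
      ∃! r, (u, v, σ r) ∈ T ∧ (r, w, σ s) ∈ T)
    (a : ℕ) (ha1 : 1 < a) (ha2 : a < n)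
    (z : ProjGeom F V n) (hz : Module.finrank F z.val = a)
    (u v : ProjGeom F V n) (hu : Module.finrank F u.val = 1)
    (hv : Module.finrank F v.val = 1) :
    ((Set.Nonempty {x : ProjGeom F V n × ProjGeom F V n × ProjGeom F V n × ProjGeom F V n |
        Module.finrank F x.1.val = a - 1 ∧ Module.finrank F x.2.1.val = 2 ∧
        Module.finrank F x.2.2.1.val = 1 ∧ Module.finrank F x.2.2.2.val = 1 ∧
        (z, σ x.2.2.1, σ x.1) ∈ T ∧ (x.2.2.1, u, σ x.2.1) ∈ T ∧
        (x.1, x.2.2.2, σ z) ∈ T ∧ (x.2.2.2, v, σ x.2.1) ∈ T}) → u = v) ∧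
    ((∃ p' : ProjGeom F V n, Module.finrank F p'.val = a + 1 ∧
        (z, u, σ p') ∈ T ∧ (z, v, σ p') ∈ T) → u = v) ∧
    (u = v →
      Nat.card {x : ProjGeom F V n × ProjGeom F V n × ProjGeom F V n × ProjGeom F V n //
          Module.finrank F x.1.val = a - 1 ∧ Module.finrank F x.2.1.val = 2 ∧
          Module.finrank F x.2.2.1.val = 1 ∧ Module.finrank F x.2.2.2.val = 1 ∧
          (z, σ x.2.2.1, σ x.1) ∈ T ∧ (x.2.2.1, u, σ x.2.1) ∈ T ∧
          (x.1, x.2.2.2, σ z) ∈ T ∧ (x.2.2.2, v, σ x.2.1) ∈ T} =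
        Nat.card {r : ProjGeom F V n // Module.finrank F r.val = 1 ∧
          (σ z).val ≤ (σ r).val ∧ u.val ≤ (σ r).val}) ∧
    (a < n - 1 → u = v → ∀ p : ℕ, p.Prime → q ≡ 1 [MOD p] →
      (Nat.card {x : ProjGeom F V n × ProjGeom F V n × ProjGeom F V n × ProjGeom F V n //
          Module.finrank F x.1.val = a - 1 ∧ Module.finrank F x.2.1.val = 2 ∧
          Module.finrank F x.2.2.1.val = 1 ∧ Module.finrank F x.2.2.2.val = 1 ∧
          (z, σ x.2.2.1, σ x.1) ∈ T ∧ (x.2.2.1, u, σ x.2.1) ∈ T ∧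
          (x.1, x.2.2.2, σ z) ∈ T ∧ (x.2.2.2, v, σ x.2.1) ∈ T} : ZMod p) =
        (Nat.card {p' : ProjGeom F V n // Module.finrank F p'.val = a + 1 ∧
          (z, u, σ p') ∈ T} : ZMod p) + ((a - 1 : ℕ) : ZMod p)) := by
  classical
  have hσinj : ∀ x y, σ x = σ y → x = y := by
    intro x y h
    rw [← hσ x, h, hσ]
  have cyc2 : ∀ a b c, (a, b, c) ∈ T → (c, a, b) ∈ T := fun a b c h => h2 _ _ _ (h2 _ _ _ h)
  have key1 : ∀ p r, (z, σ r, σ p) ∈ T → (p, r, σ z) ∈ T := by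
    intro p r h
    have := h5 _ _ _ h
    rwa [hσ, hσ] at this
  have parta : (Set.Nonempty {x : ProjGeom F V n × ProjGeom F V n × ProjGeom F V n × ProjGeom F V n |
        Module.finrank F x.1.val = a - 1 ∧ Module.finrank F x.2.1.val = 2 ∧
        Module.finrank F x.2.2.1.val = 1 ∧ Module.finrank F x.2.2.2.val = 1 ∧
        (z, σ x.2.2.1, σ x.1) ∈ T ∧ (x.2.2.1, u, σ x.2.1) ∈ T ∧
        (x.1, x.2.2.2, σ z) ∈ T ∧ (x.2.2.2, v, σ x.2.1) ∈ T}) → u = v := by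
    rintro ⟨⟨p₀, q₀, r₀, s₀⟩, hdp, hdq, hdr, hds, hT1, hT2, hT3, hT4⟩
    have hpr : (p₀, r₀, σ z) ∈ T := key1 p₀ r₀ hT1
    have hrs : s₀ = r₀ := h4 (σ z) p₀ s₀ r₀ (cyc2 _ _ _ hT3) (cyc2 _ _ _ hpr)
    subst hrs
    exact h4 (σ q₀) s₀ u v (cyc2 _ _ _ hT2) (cyc2 _ _ _ hT4)
  have partb : (∃ p' : ProjGeom F V n, Module.finrank F p'.val = a + 1 ∧
        (z, u, σ p') ∈ T ∧ (z, v, σ p') ∈ T) → u = v := by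
    rintro ⟨p', _, hT1, hT2⟩
    exact h4 (σ p') z u v (cyc2 _ _ _ hT1) (cyc2 _ _ _ hT2)
  have key_c : ∀ u v : ProjGeom F V n, Module.finrank F u.val = 1 → u = v →
      Nat.card {x : ProjGeom F V n × ProjGeom F V n × ProjGeom F V n × ProjGeom F V n //
          Module.finrank F x.1.val = a - 1 ∧ Module.finrank F x.2.1.val = 2 ∧
          Module.finrank F x.2.2.1.val = 1 ∧ Module.finrank F x.2.2.2.val = 1 ∧
          (z, σ x.2.2.1, σ x.1) ∈ T ∧ (x.2.2.1, u, σ x.2.1) ∈ T ∧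
          (x.1, x.2.2.2, σ z) ∈ T ∧ (x.2.2.2, v, σ x.2.1) ∈ T} =
        Nat.card {r : ProjGeom F V n // Module.finrank F r.val = 1 ∧
          (σ z).val ≤ (σ r).val ∧ u.val ≤ (σ r).val} := by
    clear hu hv parta partb u v
    intro u v hu huv
    subst huv
    apply Nat.card_eq_of_bijective (fun x => ⟨x.1.2.2.1, by
      obtain ⟨⟨p₀, q₀, r₀, s₀⟩, hdp, hdq, hdr, hds, hT1, hT2, hT3, hT4⟩ := x
      refine ⟨hdr, ?_, ?_⟩
      · rcases ((h1 z (σ r₀)).1 ⟨σ p₀, hT1⟩).2 with h | h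
        · exact h
        · exfalso
          have hm := Submodule.finrank_mono h
          rw [hσdim, hσdim, hz, hdr] at hm
          omega
      · rcases ((h1 r₀ u).1 ⟨σ q₀, hT2⟩).2 with h | h
        · exfalso
          have hm := Submodule.finrank_mono h
          rw [hσdim, hdr, hu] at hm
          omega
        · exact h⟩)
    constructor
    · rintro ⟨⟨px, qx, rx, sx⟩, hdpx, hdqx, hdrx, hdsx, hxT1, hxT2, hxT3, hxT4⟩
        ⟨⟨py, qy, ry, sy⟩, hdpy, hdqy, hdry, hdsy, hyT1, hyT2, hyT3, hyT4⟩ hxy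
      have hr : rx = ry := congrArg Subtype.val hxy
      subst hr
      obtain rfl : px = py := hσinj _ _ (h4 z (σ rx) (σ px) (σ py) hxT1 hyT1)
      obtain rfl : qx = qy := hσinj _ _ (h4 rx u (σ qx) (σ qy) hxT2 hyT2)
      have hsx : sx = rx := h4 (σ z) px sx rx (cyc2 _ _ _ hxT3) (cyc2 _ _ _ (key1 px rx hxT1))
      have hsy : sy = rx := h4 (σ z) px sy rx (cyc2 _ _ _ hyT3) (cyc2 _ _ _ (key1 px rx hxT1))
      subst hsx
      subst hsy
      rfl
    · rintro ⟨r, hr1, hr2, hr3⟩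
      have hzσr : σ z ≠ σ r := by
        intro h
        have := congrArg (fun t : ProjGeom F V n => Module.finrank F t.val) h
        simp only [hσdim, hz, hr1] at this
        omega
      obtain ⟨w, hw⟩ := (h1 z (σ r)).2 ⟨hzσr, Or.inl hr2⟩
      have hdw : Module.finrank F w.val = n + 1 - a := by
        have hdvd := h3 _ _ _ hw
        rw [hz, hσdim, hr1] at hdvd
        have hb := w.2
        have := aux_dvd_eq_2n hdvd (by omega) (by omega)
        omega
      have hσru : σ r ≠ u := by
        intro h
        have := congrArg (fun t : ProjGeom F V n => Module.finrank F t.val) h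
        simp only [hσdim, hr1, hu] at this
        omega
      obtain ⟨w', hw'⟩ := (h1 r u).2 ⟨hσru, Or.inr hr3⟩
      have hdw' : Module.finrank F w'.val = n - 2 := by
        have hdvd := h3 _ _ _ hw'
        rw [hr1, hu] at hdvd
        have hb := w'.2
        have := aux_dvd_eq_n hdvd (by omega) (by omega)
        omega
      refine ⟨⟨⟨σ w, σ w', r, r⟩, ?_, ?_, hr1, hr1, ?_, ?_, ?_, ?_⟩, Subtype.ext rfl⟩
      · rw [hσdim, hdw]; omega
      · rw [hσdim, hdw']; omega
      · rw [hσ]; exact hw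
      · rw [hσ]; exact hw'
      · exact key1 (σ w) r (by rw [hσ]; exact hw)
      · rw [hσ]; exact hw'
  refine ⟨parta, partb, key_c u v hu, ?_⟩
  intro ha2' huv p hp hqmod
  have hcA := key_c u v hu huv
  subst huv
  rw [hcA]
  have hq2 : 2 ≤ q := by rw [← hq]; exact Fintype.one_lt_card
  have hRH : Nat.card {r : ProjGeom F V n // Module.finrank F r.val = 1 ∧
      (σ z).val ≤ (σ r).val ∧ u.val ≤ (σ r).val}
      = Nat.card {H : Submodule F V // Module.finrank F H = n - 1 ∧
        (σ z).val ⊔ u.val ≤ H} := by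
    apply Nat.card_eq_of_bijective (fun r => ⟨(σ r.1).val, by
      refine ⟨?_, sup_le r.2.2.1 r.2.2.2⟩
      rw [hσdim, r.2.1]⟩)
    constructor
    · intro r1 r2 h
      have h' := congrArg Subtype.val h
      exact Subtype.ext (hσinj _ _ (Subtype.ext h'))
    · rintro ⟨H, hH1, hH2⟩
      have pf : 0 < Module.finrank F H ∧ Module.finrank F H < n := by rw [hH1]; omega
      set P : ProjGeom F V n := ⟨H, pf⟩ with hP
      refine ⟨⟨σ P, ?_, ?_, ?_⟩, ?_⟩
      · rw [hσdim]
        show n - Module.finrank F H = 1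
        rw [hH1]
        omega
      · rw [hσ]
        exact le_trans le_sup_left hH2
      · rw [hσ]
        exact le_trans le_sup_right hH2
      · apply Subtype.ext
        show (σ (σ P)).val = H
        rw [hσ]
  rw [hRH]
  have hcount := aux_card_hyperplanes ((σ z).val ⊔ u.val) (by rw [hn]; omega)
  rw [hq, hn] at hcount
  rw [aux_zmod hq2 hcount hqmod]
  have hdσz : Module.finrank F (σ z).val = n - a := by rw [hσdim, hz]
  by_cases hcase : u.val ≤ (σ z).val
  · have hWeq : (σ z).val ⊔ u.val = (σ z).val := sup_eq_left.mpr hcase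
    have hfW : n - Module.finrank F ((σ z).val ⊔ u.val : Submodule F V) = a := by rw [hWeq, hdσz]; omega
    have hzu : σ z ≠ u := by
      intro h
      have := congrArg (fun t : ProjGeom F V n => Module.finrank F t.val) h
      simp only [hσdim, hz, hu] at this
      omega
    obtain ⟨w, hw⟩ := (h1 z u).2 ⟨hzu, Or.inr hcase⟩
    have hdw : Module.finrank F w.val = n - a - 1 := by
      have hdvd := h3 _ _ _ hw
      rw [hz, hu] at hdvd
      have hb := w.2
      have := aux_dvd_eq_n hdvd (by omega) (by omega)
      omega
    have hone : Nat.card {p' : ProjGeom F V n // Module.finrank F p'.val = a + 1 ∧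
        (z, u, σ p') ∈ T} = 1 := by
      rw [Nat.card_eq_one_iff_unique]
      constructor
      · constructor
        intro x y
        apply Subtype.ext
        exact hσinj _ _ (h4 z u (σ x.1) (σ y.1) x.2.2 y.2.2)
      · exact ⟨⟨σ w, by rw [hσdim, hdw]; omega, by rw [hσ]; exact hw⟩⟩
    rw [hfW, hone]
    conv_lhs => rw [show a = 1 + (a - 1) from by omega]
    push_cast
    ring
  · have hinf : Module.finrank F ((σ z).val ⊓ u.val : Submodule F V) = 0 := by
      have hle : Module.finrank F ((σ z).val ⊓ u.val : Submodule F V) ≤ 1 := by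
        have := Submodule.finrank_mono (inf_le_right : (σ z).val ⊓ u.val ≤ u.val)
        rwa [hu] at this
      rcases Nat.lt_or_ge (Module.finrank F ((σ z).val ⊓ u.val : Submodule F V)) 1 with h | h
      · omega
      · exfalso
        have heq : (σ z).val ⊓ u.val = u.val :=
          Submodule.eq_of_le_of_finrank_eq inf_le_right (by rw [hu]; omega)
        exact hcase (heq ▸ inf_le_left)
    have hsup := Submodule.finrank_sup_add_finrank_inf_eq (σ z).val u.val
    rw [hdσz, hu, hinf] at hsup
    have hfW : n - Module.finrank F ((σ z).val ⊔ u.val : Submodule F V) = a - 1 := by omega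
    have hempty : IsEmpty {p' : ProjGeom F V n // Module.finrank F p'.val = a + 1 ∧
        (z, u, σ p') ∈ T} := by
      constructor
      rintro ⟨p', hp', hT⟩
      rcases ((h1 z u).1 ⟨σ p', hT⟩).2 with h | h
      · have hm := Submodule.finrank_mono h
        rw [hdσz, hu] at hm
        omega
      · exact hcase h
    haveI := hempty
    rw [hfW, Nat.card_of_isEmpty]
    simp
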